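/- arXiv:2205.07694 — 3 statements merged into one kernel-verified Lean document; each statement's English description precedes it below -/
import Mathlib

section
/- Let (X, Σ, μ) be a measure space with μ(X) < ∞. Let gₙ, g : X → ℝ be integrable functions with gₙ → g in L¹(μ) (i.e. ∫ |gₙ − g| dμ → 0). Let fₙ : X → ℝ be integrable functions with fₙ ≤ gₙ μ-almost everywhere for every n, and suppose fₙ → f pointwise μ-almost everywhere, where f : X → ℝ is measurable, the positive part f⁺ := max(f,0) is integrable, but the lower Lebesgue integral of the negative part is infinite, ∫⁻ f⁻ dμ = ∞. Then ∫ fₙ dμ tends to −∞ (i.e. the sequence of integrals tends to the bottom filter atBot). (This is the non-integrable case of the paper's version of the reverse Fatou lemma, Lemma 4.3.) -/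
open MeasureTheory Filter

/-- A version of the reverse Fatou lemma (non-integrable case):
if `gₙ → g` in `L¹(μ)` on a finite measure space, `fₙ ≤ gₙ` a.e. for each `n`,
and `fₙ → f` pointwise a.e., where `f` is measurable, its positive part
`f⁺ = max(f, 0)` is integrable, but the lower Lebesgue integral of its negative
part `f⁻ = max(−f, 0)` is infinite, then `∫ fₙ dμ → −∞`. -/
theorem reverse_fatou_nonintegrable_case
    {X : Type*} [MeasurableSpace X] {μ : Measure X} [IsFiniteMeasure μ]
    (fn gn : ℕ → X → ℝ) (f g : X → ℝ)
    (hfn_int : ∀ n, Integrable (fn n) μ)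
    (hgn_int : ∀ n, Integrable (gn n) μ)
    (hg_int : Integrable g μ)
    (hf_meas : Measurable f)
    (hf_plus : Integrable (fun x => max (f x) 0) μ)
    (hf_minus : ∫⁻ x, ENNReal.ofReal (max (-f x) 0) ∂μ = ⊤)
    (hL1 : Tendsto (fun n => ∫ x, |gn n x - g x| ∂μ) atTop (nhds 0))
    (hle : ∀ n, ∀ᵐ x ∂μ, fn n x ≤ gn n x)
    (hptw : ∀ᵐ x ∂μ, Tendsto (fun n => fn n x) atTop (nhds (f x))) :
    Tendsto (fun n => ∫ x, fn n x ∂μ) atTop atBot := by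
  -- h n = gn n - fn n, nonneg a.e., integrable
  set h : ℕ → X → ℝ := fun n x => gn n x - fn n x with hh
  have hh_int : ∀ n, Integrable (h n) μ := fun n => (hgn_int n).sub (hfn_int n)
  have hh_nonneg : ∀ n, 0 ≤ᵐ[μ] h n := fun n =>
    (hle n).mono fun x hx => sub_nonneg.mpr hx
  -- ∫ gn → ∫ g
  have hgint_tendsto : Tendsto (fun n => ∫ x, gn n x ∂μ) atTop (nhds (∫ x, g x ∂μ)) := by
    have hb : ∀ n, |(∫ x, gn n x ∂μ) - ∫ x, g x ∂μ| ≤ ∫ x, |gn n x - g x| ∂μ := by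
      intro n
      rw [← integral_sub (hgn_int n) hg_int]
      calc |∫ x, (gn n x - g x) ∂μ| = ‖∫ x, (gn n x - g x) ∂μ‖ := (Real.norm_eq_abs _).symm
        _ ≤ ∫ x, ‖gn n x - g x‖ ∂μ := norm_integral_le_integral_norm _
        _ = ∫ x, |gn n x - g x| ∂μ := by simp [Real.norm_eq_abs]
    have : Tendsto (fun n => (∫ x, gn n x ∂μ) - ∫ x, g x ∂μ) atTop (nhds 0) := by
      have h1 : Tendsto (fun n => |(∫ x, gn n x ∂μ) - ∫ x, g x ∂μ|) atTop (nhds 0) :=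
        squeeze_zero (fun n => abs_nonneg _) hb hL1
      exact tendsto_zero_iff_abs_tendsto_zero _ |>.mpr h1
    have := this.add_const (∫ x, g x ∂μ)
    simpa using this
  -- ∫⁻ ofReal (g - f) = ⊤
  have hgf_top : ∫⁻ x, ENNReal.ofReal (g x - f x) ∂μ = ⊤ := by
    have hmaj : Integrable (fun x => |g x| + max (f x) 0) μ := hg_int.abs.add hf_plus
    have hmaj_lt : ∫⁻ x, ENNReal.ofReal (|g x| + max (f x) 0) ∂μ < ⊤ := by
      rw [← ofReal_integral_eq_lintegral_ofReal hmaj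
        (Eventually.of_forall fun x => add_nonneg (abs_nonneg _) (le_max_right _ _))]
      exact ENNReal.ofReal_lt_top
    have hpt : ∀ x, ENNReal.ofReal (max (-f x) 0) ≤
        ENNReal.ofReal (g x - f x) + ENNReal.ofReal (|g x| + max (f x) 0) := by
      intro x
      calc ENNReal.ofReal (max (-f x) 0)
          ≤ ENNReal.ofReal ((g x - f x) + (|g x| + max (f x) 0)) := by
            apply ENNReal.ofReal_le_ofReal
            rcases le_or_gt (f x) 0 with hx | hx
            · rw [max_eq_left (neg_nonneg.mpr hx)]
              nlinarith [abs_nonneg (g x), neg_abs_le (g x), le_max_right (f x) 0]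
            · rw [max_eq_right (neg_nonpos.mpr hx.le)]
              nlinarith [abs_nonneg (g x), neg_abs_le (g x), le_max_left (f x) 0]
        _ ≤ ENNReal.ofReal (g x - f x) + ENNReal.ofReal (|g x| + max (f x) 0) :=
            ENNReal.ofReal_add_le
    have hle' : (⊤ : ENNReal) ≤ ∫⁻ x, ENNReal.ofReal (g x - f x) ∂μ +
        ∫⁻ x, ENNReal.ofReal (|g x| + max (f x) 0) ∂μ := by
      rw [← hf_minus]
      calc ∫⁻ x, ENNReal.ofReal (max (-f x) 0) ∂μ
          ≤ ∫⁻ x, (ENNReal.ofReal (g x - f x) + ENNReal.ofReal (|g x| + max (f x) 0)) ∂μ :=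
            lintegral_mono hpt
        _ = _ := lintegral_add_left'
            (ENNReal.measurable_ofReal.comp_aemeasurable
              (hg_int.aemeasurable.sub hf_meas.aemeasurable)) _
    by_contra hne
    have : (⊤ : ENNReal) < ⊤ := lt_of_le_of_lt hle'
      (ENNReal.add_lt_top.mpr ⟨lt_top_iff_ne_top.mpr hne, hmaj_lt⟩)
    exact lt_irrefl _ this
  -- I n := ∫ h n tends to atTop
  have hI : Tendsto (fun n => ∫ x, h n x ∂μ) atTop atTop := by
    by_contra hcon
    rw [tendsto_atTop] at hcon
    push_neg at hcon
    obtain ⟨M, hM⟩ := hcon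
    obtain ⟨φ, hφ_mono, hφ⟩ := Filter.extraction_of_frequently_atTop hM
    -- gn ∘ φ tends to g in measure
    have hsm : ∀ n, AEStronglyMeasurable (gn n) μ := fun n => (hgn_int n).1
    have heLp : Tendsto (fun n => eLpNorm (gn n - g) 1 μ) atTop (nhds 0) := by
      have heq : ∀ n, eLpNorm (gn n - g) 1 μ = ENNReal.ofReal (∫ x, |gn n x - g x| ∂μ) := by
        intro n
        have habs : Integrable (fun x => |gn n x - g x|) μ := ((hgn_int n).sub hg_int).abs
        rw [eLpNorm_one_eq_lintegral_enorm,
          ofReal_integral_eq_lintegral_ofReal habs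
            (Eventually.of_forall fun x => abs_nonneg _)]
        simp only [Pi.sub_apply, Real.enorm_eq_ofReal_abs]
      simp_rw [heq]
      have := ENNReal.continuous_ofReal.continuousAt (x := (0 : ℝ)) |>.tendsto.comp hL1
      simpa [Function.comp_def] using this
    have hTIM : TendstoInMeasure μ gn atTop g :=
      tendstoInMeasure_of_tendsto_eLpNorm one_ne_zero hsm hg_int.1 heLp
    have hTIMφ : TendstoInMeasure μ (fun k => gn (φ k)) atTop g := fun ε hε =>
      (hTIM ε hε).comp hφ_mono.tendsto_atTop
    obtain ⟨ψ, hψ_mono, hae⟩ := hTIMφ.exists_seq_tendsto_ae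
    -- along φ ∘ ψ, h converges a.e. to g - f
    have haeh : ∀ᵐ x ∂μ, Tendsto (fun k => h (φ (ψ k)) x) atTop (nhds (g x - f x)) := by
      filter_upwards [hae, hptw] with x hx1 hx2
      exact hx1.sub (hx2.comp (hφ_mono.comp hψ_mono).tendsto_atTop)
    -- Fatou
    have hFatou : ∫⁻ x, ENNReal.ofReal (g x - f x) ∂μ ≤
        Filter.liminf (fun k => ∫⁻ x, ENNReal.ofReal (h (φ (ψ k)) x) ∂μ) atTop := by
      have hcongr : ∫⁻ x, ENNReal.ofReal (g x - f x) ∂μ =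
          ∫⁻ x, Filter.liminf (fun k => ENNReal.ofReal (h (φ (ψ k)) x)) atTop ∂μ := by
        apply lintegral_congr_ae
        filter_upwards [haeh] with x hx
        have := (ENNReal.continuous_ofReal.continuousAt.tendsto.comp hx).liminf_eq
        simp only [Function.comp_def] at this
        exact this.symm
      rw [hcongr]
      exact lintegral_liminf_le' fun k =>
        (ENNReal.measurable_ofReal.comp_aemeasurable (hh_int (φ (ψ k))).aemeasurable)
    -- but each lintegral ≤ ofReal M
    have hbound : ∀ k, ∫⁻ x, ENNReal.ofReal (h (φ (ψ k)) x) ∂μ ≤ ENNReal.ofReal M := by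
      intro k
      rw [← ofReal_integral_eq_lintegral_ofReal (hh_int _) (hh_nonneg _)]
      exact ENNReal.ofReal_le_ofReal (hφ (ψ k)).le
    have hliminf_le : Filter.liminf (fun k => ∫⁻ x, ENNReal.ofReal (h (φ (ψ k)) x) ∂μ) atTop ≤
        ENNReal.ofReal M :=
      liminf_le_of_frequently_le (Frequently.of_forall hbound)
    rw [hgf_top] at hFatou
    exact absurd (le_trans hFatou hliminf_le) (by simp [ENNReal.ofReal_lt_top.ne])
  -- conclude
  have hfn_eq : ∀ n, ∫ x, fn n x ∂μ = (∫ x, gn n x ∂μ) - ∫ x, h n x ∂μ := by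
    intro n
    rw [← integral_sub (hgn_int n) (hh_int n)]
    simp [hh]
  simp_rw [hfn_eq]
  exact Filter.Tendsto.add_atBot hgint_tendsto (tendsto_neg_atTop_atBot.comp hI) |>.congr
    (fun n => by simp [Function.comp, sub_eq_add_neg, hh])
end

section
/- For all 2×2 real matrices A, B and all real numbers p, q, one has the identity ⟨p·cof A − q·cof B, A − B⟩ = (p − q)(det A − det B) + (p + q)·det(A − B), where ⟨·,·⟩ is the Frobenius inner product. (This is the key algebraic identity, combining equations (2.7)–(2.12), in the proof of Lemma 4.1 of the paper.) -/
/-- The cofactor matrix of a 2×2 real matrix (transpose of the adjugate). -/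
def cof (A : Matrix (Fin 2) (Fin 2) ℝ) : Matrix (Fin 2) (Fin 2) ℝ :=
  !![A 1 1, -(A 1 0); -(A 0 1), A 0 0]

/-- The Frobenius inner product of two 2×2 real matrices. -/
def frobInner (A B : Matrix (Fin 2) (Fin 2) ℝ) : ℝ :=
  ∑ i, ∑ j, A i j * B i j

/-- The key algebraic identity (combining (2.7)–(2.12) in the paper):
`⟨p·cof A − q·cof B, A − B⟩ = (p − q)(det A − det B) + (p + q)·det(A − B)`. -/
theorem frobInner_cof_identity (A B : Matrix (Fin 2) (Fin 2) ℝ) (p q : ℝ) :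
    frobInner (p • cof A - q • cof B) (A - B)
      = (p - q) * (A.det - B.det) + (p + q) * (A - B).det := by
  simp [frobInner, cof, Matrix.det_fin_two, Fin.sum_univ_two, Matrix.sub_apply,
    Matrix.smul_apply, Matrix.cons_val_zero, Matrix.cons_val_one, Matrix.head_cons,
    smul_eq_mul]
  ring
end

section
/- Let γ > 0 and let φ : ℝ → ℝ be monotone nondecreasing with 0 ≤ φ(t) ≤ γ for all t ∈ ℝ. Then for all 2×2 real matrices A, B one has ⟨φ(det A)·cof A − φ(det B)·cof B, A − B⟩ ≥ −γ·|A − B|², where ⟨·,·⟩ is the Frobenius inner product and |·| the Frobenius norm. (This is the pointwise matrix form of the lower bound in Lemma 4.1(i) of the paper, applied with A, B the two gradient values in a difference quotient.) -/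
/-- The Frobenius norm of a 2×2 real matrix. -/
noncomputable def frobNorm (A : Matrix (Fin 2) (Fin 2) ℝ) : ℝ :=
  Real.sqrt (frobInner A A)

set_option maxHeartbeats 1000000 in
/-- Pointwise matrix form of the lower bound, Lemma 4.1(i) of the paper:
if `φ` is monotone with `0 ≤ φ ≤ γ`, then
`⟨φ(det A)·cof A − φ(det B)·cof B, A − B⟩ ≥ −γ·|A − B|²`. -/
theorem frobInner_cof_monotone_lower_bound
    (γ : ℝ) (hγ : 0 < γ) (φ : ℝ → ℝ) (hφ_mono : Monotone φ)
    (hφ_nonneg : ∀ t, 0 ≤ φ t) (hφ_le : ∀ t, φ t ≤ γ)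
    (A B : Matrix (Fin 2) (Fin 2) ℝ) :
    frobInner (φ A.det • cof A - φ B.det • cof B) (A - B)
      ≥ -γ * (frobNorm (A - B)) ^ 2 := by
  set a := A.det with ha
  set b := B.det with hb
  have hdetA : a = A 0 0 * A 1 1 - A 0 1 * A 1 0 := by
    rw [ha, Matrix.det_fin_two]
  have hdetB : b = B 0 0 * B 1 1 - B 0 1 * B 1 0 := by
    rw [hb, Matrix.det_fin_two]
  set d : ℝ := (A 0 0 - B 0 0) * (A 1 1 - B 1 1) - (A 0 1 - B 0 1) * (A 1 0 - B 1 0)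
    with hd
  clear_value d
  set n : ℝ := frobInner (A - B) (A - B) with hn
  clear_value n
  have hn' : n = (A 0 0 - B 0 0)^2 + (A 0 1 - B 0 1)^2 + (A 1 0 - B 1 0)^2
      + (A 1 1 - B 1 1)^2 := by
    simp [hn, frobInner, Fin.sum_univ_two, Matrix.sub_apply]
    ring
  have hnorm : (frobNorm (A - B)) ^ 2 = n := by
    rw [frobNorm, ← hn, Real.sq_sqrt]
    rw [hn']; positivity
  have hLHS : frobInner (φ a • cof A - φ b • cof B) (A - B)
      = (φ a - φ b) * (a - b) + (φ a + φ b) * d := by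
    simp [frobInner, cof, Fin.sum_univ_two, Matrix.sub_apply, Matrix.smul_apply,
      Matrix.cons_val', Matrix.cons_val_zero, Matrix.cons_val_one, Matrix.head_cons,
      Matrix.head_fin_const, hdetA, hdetB, hd, smul_eq_mul]
    ring
  have hmono : 0 ≤ (φ a - φ b) * (a - b) := by
    rcases le_total a b with h | h
    · have := hφ_mono h
      nlinarith
    · have := hφ_mono h
      nlinarith
  have hub : 2 * d ≤ n := by
    rw [hn', hd]
    nlinarith [sq_nonneg (A 0 0 - B 0 0 - (A 1 1 - B 1 1)),
      sq_nonneg (A 0 1 - B 0 1 + (A 1 0 - B 1 0))]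
  have hlb : -(2 * d) ≤ n := by
    rw [hn', hd]
    nlinarith [sq_nonneg (A 0 0 - B 0 0 + (A 1 1 - B 1 1)),
      sq_nonneg (A 0 1 - B 0 1 - (A 1 0 - B 1 0))]
  have habs : 2 * |d| ≤ n := by
    rcases abs_cases d with ⟨h1, _⟩ | ⟨h1, _⟩ <;> rw [h1] <;> linarith
  have hφa := hφ_nonneg a
  have hφb := hφ_nonneg b
  have hφa' := hφ_le a
  have hφb' := hφ_le b
  have hd1 : -|d| ≤ d := neg_abs_le d
  have habs0 : 0 ≤ |d| := abs_nonneg d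
  rw [hLHS, hnorm]
  nlinarith [mul_le_mul_of_nonneg_right (add_le_add hφa' hφb') habs0,
    mul_le_mul_of_nonneg_left hd1 (add_nonneg hφa hφb)]
end
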